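/- In the one-dimensional output case $M_L = 1$, the PC fixed-point gradient direction coincides with the backpropagation gradient direction: since $C_\gamma = \sum_{i=2}^L \frac{\gamma_L}{\gamma_{i-1}} W_{L:i} W_{L:i}^\top$ is a nonnegative scalar $c \ge 0$ when $M_L = 1$, we have $e_l^* = \frac{\gamma_L}{\gamma_l (1 + c)} W_{L:l+1}^\top (y - W_{L:1}x)$, a positive scalar multiple of the backpropagated error $W_{L:l+1}^\top(y - W_{L:1}x)$. -/

import Mathlib

open Matrix Finset

/-- The hidden-layer matrix chain `W_{j:i} = W j * W (j-1) * ⋯ * W i` (identity for `i > j`). -/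
noncomputable def Hch {d : ℕ} (W : ℕ → Matrix (Fin d) (Fin d) ℝ) (i j : ℕ) :
    Matrix (Fin d) (Fin d) ℝ :=
  ((List.range (j + 1 - i)).map fun k => W (j - k)).prod

/-- **Scalar output (`M_L = 1`): PC fixed-point direction equals the BP direction.**
With output weight `WL : 1 × d` and `V i = W_{L:i} = WL * W_{L-1} ⋯ W_i`, the preconditioner
`C_γ` is the nonnegative scalar `c`, and the fixed-point layer error
`(γ_L/γ_l) • V_{l+1}ᵀ (I + C)⁻¹ (y - V_1 x)` equals
`(γ_L/(γ_l (1+c))) • V_{l+1}ᵀ (y - V_1 x)`, a positive multiple of the BP error. -/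
theorem pc_scalar_output_matches_bp (d L : ℕ) (hL : 2 ≤ L)
    (W : ℕ → Matrix (Fin d) (Fin d) ℝ) (WL : Matrix (Fin 1) (Fin d) ℝ)
    (γ : ℕ → ℝ) (hγ : ∀ l, 1 ≤ l → l ≤ L → 0 < γ l)
    (x : Fin d → ℝ) (y : Fin 1 → ℝ)
    (V : ℕ → Matrix (Fin 1) (Fin d) ℝ) (hV : ∀ i, V i = WL * Hch W i (L - 1))
    (c : ℝ) (hc : c = ∑ i ∈ Finset.Icc 2 L, (γ L / γ (i - 1)) * ((V i * (V i)ᵀ) 0 0))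
    (C : Matrix (Fin 1) (Fin 1) ℝ)
    (hC : C = ∑ i ∈ Finset.Icc 2 L, (γ L / γ (i - 1)) • (V i * (V i)ᵀ)) :
    0 ≤ c ∧
    ∀ l, 1 ≤ l → l ≤ L - 1 →
      (γ L / γ l) • ((V (l + 1))ᵀ *ᵥ
          (((1 : Matrix (Fin 1) (Fin 1) ℝ) + C)⁻¹ *ᵥ (y - V 1 *ᵥ x))) =
        (γ L / (γ l * (1 + c))) • ((V (l + 1))ᵀ *ᵥ (y - V 1 *ᵥ x)) := by
  have hc0 : 0 ≤ c := by
    rw [hc]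
    apply Finset.sum_nonneg
    intro i hi
    simp only [Finset.mem_Icc] at hi
    have h1 : 0 < γ (i - 1) := hγ _ (by omega) (by omega)
    have h2 : 0 < γ L := hγ _ (by omega) le_rfl
    apply mul_nonneg (le_of_lt (div_pos h2 h1))
    have : (V i * (V i)ᵀ) 0 0 = ∑ k, V i 0 k * V i 0 k := by
      simp [Matrix.mul_apply, Matrix.transpose_apply]
    rw [this]
    exact Finset.sum_nonneg fun k _ => mul_self_nonneg _
  have hCc : C 0 0 = c := by
    rw [hC, hc]
    simp [Matrix.sum_apply]
  have h1c : (0:ℝ) < 1 + c := by linarith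
  have hone : (1 : Matrix (Fin 1) (Fin 1) ℝ) + C = (1 + c) • 1 := by
    ext i j
    fin_cases i; fin_cases j
    simp [hCc]
  have hinv : ((1 : Matrix (Fin 1) (Fin 1) ℝ) + C)⁻¹ = (1 + c)⁻¹ • 1 := by
    rw [hone]
    apply Matrix.inv_eq_right_inv
    rw [Matrix.smul_mul, Matrix.mul_smul, Matrix.one_mul, smul_smul,
      mul_inv_cancel₀ (ne_of_gt h1c), one_smul]
  refine ⟨hc0, fun l hl1 hl2 => ?_⟩
  rw [hinv, Matrix.smul_mulVec, Matrix.one_mulVec, Matrix.mulVec_smul,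
    smul_smul]
  congr 1
  rw [div_eq_mul_inv, div_eq_mul_inv, mul_inv, mul_assoc]
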